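/- For n₁ ∈ ℝ, v ∈ ℝ, and t > 0, the limit as G → 0 within {Re(G) > 0, Im(G) > 0} of the double integral ∫₀^∞ dσ (1/π)·t/(1+(σt)²) e^{iσ(G+v)} ∫₀^∞ dτ (1/π)·σ/(1+(τσ)²) e^{−G/τ} equals (1/2)∫₀^∞ dσ (1/π)·t/(1+(σt)²) e^{iσ v}. -/

import Mathlib

open Real MeasureTheory Filter Topology

set_option maxHeartbeats 1000000

lemma cauchy_integrable (s : ℝ) (hs : 0 < s) :
    IntegrableOn (fun τ : ℝ => (1 / π) * s / (1 + (τ * s) ^ 2)) (Set.Ioi 0) := by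
  have h0 : Integrable (fun τ : ℝ => (1 + (τ * s) ^ 2)⁻¹) := by
    have := (integrable_inv_one_add_sq).comp_mul_right' (ne_of_gt hs)
    simpa using this
  have := (h0.const_mul ((1 / π) * s)).integrableOn (s := Set.Ioi (0:ℝ))
  refine this.congr_fun (fun τ _ => ?_) measurableSet_Ioi
  ring

lemma cauchy_integral (s : ℝ) (hs : 0 < s) :
    ∫ τ in Set.Ioi (0 : ℝ), (1 / π) * s / (1 + (τ * s) ^ 2) = 1 / 2 := by
  have h1 : ∫ τ in Set.Ioi (0 : ℝ), (1 + (τ * s) ^ 2)⁻¹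
      = s⁻¹ • ∫ x in Set.Ioi (0 * s : ℝ), (1 + x ^ 2)⁻¹ :=
    integral_comp_mul_right_Ioi (fun x => (1 + x ^ 2)⁻¹) 0 hs
  simp only [zero_mul, integral_Ioi_inv_one_add_sq, arctan_zero, sub_zero, smul_eq_mul] at h1
  have h2 : ∫ τ in Set.Ioi (0 : ℝ), (1 / π) * s / (1 + (τ * s) ^ 2)
      = (1 / π) * s * ∫ τ in Set.Ioi (0 : ℝ), (1 + (τ * s) ^ 2)⁻¹ := by
    rw [← integral_const_mul]
    exact setIntegral_congr_fun measurableSet_Ioi fun τ _ => by ring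
  rw [h2, h1]
  field_simp

lemma inner_meas (G : ℂ) :
    Measurable (fun τ : ℝ => Complex.exp (-(G / (τ : ℂ)))) := by
  have : (fun τ : ℝ => Complex.exp (-(G / (τ : ℂ))))
      = fun τ : ℝ => Complex.exp (-(G * ((τ⁻¹ : ℝ) : ℂ))) := by
    funext τ; rw [div_eq_mul_inv, Complex.ofReal_inv]
  rw [this]
  exact Complex.continuous_exp.measurable.comp
    ((measurable_const.mul (Complex.measurable_ofReal.comp measurable_inv)).neg)

lemma coeff_meas (s : ℝ) : Measurable (fun τ : ℝ => (1 / π) * s / (1 + (τ * s) ^ 2)) := by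
  fun_prop

lemma coeff_nonneg (s : ℝ) (hs : 0 ≤ s) (τ : ℝ) : 0 ≤ (1 / π) * s / (1 + (τ * s) ^ 2) := by
  have : (0:ℝ) < 1 + (τ * s) ^ 2 := by positivity
  have h1 : (0:ℝ) ≤ 1 / π := by positivity
  positivity

lemma norm_term_le (s : ℝ) (hs : 0 ≤ s) (G : ℂ) (hG : 0 ≤ G.re) {τ : ℝ} (hτ : τ ∈ Set.Ioi (0:ℝ)) :
    ‖(((1 / π) * s / (1 + (τ * s) ^ 2) : ℝ) : ℂ) * Complex.exp (-(G / τ))‖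
      ≤ (1 / π) * s / (1 + (τ * s) ^ 2) := by
  rw [norm_mul, Complex.norm_real, Real.norm_eq_abs, abs_of_nonneg (coeff_nonneg s hs τ),
    Complex.norm_exp]
  have hre : (-(G / (τ:ℂ))).re = -(G.re / τ) := by
    simp [Complex.div_ofReal_re]
  rw [hre]
  have : Real.exp (-(G.re / τ)) ≤ 1 := by
    rw [Real.exp_le_one_iff]
    have : (0:ℝ) ≤ G.re / τ := div_nonneg hG (le_of_lt hτ)
    linarith
  nlinarith [coeff_nonneg s hs τ, Real.exp_pos (-(G.re / τ))]

lemma inner_tendsto (σ : ℝ) (hσ : 0 < σ) :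
    Tendsto (fun G : ℂ => ∫ τ in Set.Ioi (0 : ℝ),
        (((1 / π) * σ / (1 + (τ * σ) ^ 2) : ℝ) : ℂ) * Complex.exp (-(G / τ)))
      (nhdsWithin 0 {G : ℂ | 0 < G.re ∧ 0 < G.im})
      (nhds ((1 / 2 : ℝ) : ℂ)) := by
  have key : ∫ τ in Set.Ioi (0 : ℝ), (((1 / π) * σ / (1 + (τ * σ) ^ 2) : ℝ) : ℂ)
      = ((1 / 2 : ℝ) : ℂ) := by
    rw [← cauchy_integral σ hσ]
    exact integral_ofReal
  rw [← key]
  apply tendsto_integral_filter_of_dominated_convergence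
      (fun τ : ℝ => (1 / π) * σ / (1 + (τ * σ) ^ 2))
  · filter_upwards with G
    exact ((Complex.measurable_ofReal.comp (coeff_meas σ)).mul (inner_meas G)).aestronglyMeasurable
  · filter_upwards [self_mem_nhdsWithin] with G hG
    refine (ae_restrict_iff' measurableSet_Ioi).mpr (ae_of_all _ fun τ hτ => ?_)
    exact norm_term_le σ hσ.le G hG.1.le hτ
  · exact cauchy_integrable σ hσ
  · refine (ae_restrict_iff' measurableSet_Ioi).mpr (ae_of_all _ fun τ hτ => ?_)
    have hexp : Tendsto (fun G : ℂ => Complex.exp (-(G / (τ:ℂ)))) (nhds 0) (nhds 1) := by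
      have hcont : Continuous fun G : ℂ => Complex.exp (-(G / (τ:ℂ))) := by
        exact Complex.continuous_exp.comp ((continuous_id.div_const _).neg)
      simpa using hcont.tendsto 0
    have hmul : Tendsto
        (fun G : ℂ => (((1 / π) * σ / (1 + (τ * σ) ^ 2) : ℝ) : ℂ) * Complex.exp (-(G / (τ:ℂ))))
        (nhds 0) (nhds ((((1 / π) * σ / (1 + (τ * σ) ^ 2) : ℝ) : ℂ) * 1)) :=
      tendsto_const_nhds.mul hexp
    simpa using hmul.mono_left nhdsWithin_le_nhds

/-- for real `v` and `t > 0`, as `G → 0` within the open quadrant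
`{Re G > 0, Im G > 0}`,
`∫₀^∞ (1/π) t/(1+(σt)²) e^{iσ(G+v)} (∫₀^∞ (1/π) σ/(1+(τσ)²) e^{−G/τ} dτ) dσ`
tends to `(1/2)∫₀^∞ (1/π) t/(1+(σt)²) e^{iσv} dσ`. -/
theorem double_integral_limit (v t : ℝ) (ht : 0 < t) :
    Tendsto
      (fun G : ℂ =>
        ∫ σ in Set.Ioi (0 : ℝ),
          (((1 / π) * t / (1 + (σ * t) ^ 2) : ℝ) : ℂ) *
            Complex.exp (Complex.I * σ * (G + v)) *
            ∫ τ in Set.Ioi (0 : ℝ),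
              (((1 / π) * σ / (1 + (τ * σ) ^ 2) : ℝ) : ℂ) * Complex.exp (-(G / τ)))
      (nhdsWithin 0 {G : ℂ | 0 < G.re ∧ 0 < G.im})
      (nhds ((1 / 2) * ∫ σ in Set.Ioi (0 : ℝ),
        (((1 / π) * t / (1 + (σ * t) ^ 2) : ℝ) : ℂ) * Complex.exp (Complex.I * σ * v))) := by
  have hhalf : ((1:ℂ) / 2) * (∫ σ in Set.Ioi (0 : ℝ),
        (((1 / π) * t / (1 + (σ * t) ^ 2) : ℝ) : ℂ) * Complex.exp (Complex.I * σ * v))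
      = ∫ σ in Set.Ioi (0 : ℝ),
        (((1 / π) * t / (1 + (σ * t) ^ 2) : ℝ) : ℂ) * Complex.exp (Complex.I * σ * v)
          * ((1 / 2 : ℝ) : ℂ) := by
    rw [integral_mul_const]
    push_cast
    ring
  rw [hhalf]
  apply tendsto_integral_filter_of_dominated_convergence
      (fun σ : ℝ => (1 / π) * t / (1 + (σ * t) ^ 2))
  · filter_upwards with G
    have m1 : Measurable fun σ : ℝ =>
        (((1 / π) * t / (1 + (σ * t) ^ 2) : ℝ) : ℂ) * Complex.exp (Complex.I * σ * (G + v)) := by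
      apply Measurable.mul
      · exact Complex.measurable_ofReal.comp (coeff_meas t)
      · exact Complex.continuous_exp.measurable.comp
          (((measurable_const.mul Complex.measurable_ofReal).mul measurable_const))
    have hjm : Measurable fun p : ℝ × ℝ =>
        (((1 / π) * p.1 / (1 + (p.2 * p.1) ^ 2) : ℝ) : ℂ) * Complex.exp (-(G / (p.2 : ℂ))) := by
      apply Measurable.mul
      · refine Complex.measurable_ofReal.comp ?_
        fun_prop
      · exact (inner_meas G).comp measurable_snd
    have m2 : AEStronglyMeasurable (fun σ : ℝ => ∫ τ in Set.Ioi (0 : ℝ),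
        (((1 / π) * σ / (1 + (τ * σ) ^ 2) : ℝ) : ℂ) * Complex.exp (-(G / τ)))
        (volume.restrict (Set.Ioi 0)) :=
      AEStronglyMeasurable.integral_prod_right' (f := fun p : ℝ × ℝ =>
        (((1 / π) * p.1 / (1 + (p.2 * p.1) ^ 2) : ℝ) : ℂ) * Complex.exp (-(G / (p.2 : ℂ))))
        hjm.aestronglyMeasurable
    exact m1.aestronglyMeasurable.mul m2
  · filter_upwards [self_mem_nhdsWithin] with G hG
    refine (ae_restrict_iff' measurableSet_Ioi).mpr (ae_of_all _ fun σ hσ => ?_)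
    have hσ' : (0:ℝ) < σ := hσ
    have hc := coeff_nonneg t ht.le σ
    have heb : ‖Complex.exp (Complex.I * σ * (G + v))‖ ≤ 1 := by
      rw [Complex.norm_exp, Real.exp_le_one_iff]
      have hre : (Complex.I * σ * (G + v)).re = -(σ * G.im) := by
        simp [Complex.mul_re, Complex.mul_im]
      rw [hre]
      nlinarith [hG.2]
    have hib : ‖∫ τ in Set.Ioi (0 : ℝ),
        (((1 / π) * σ / (1 + (τ * σ) ^ 2) : ℝ) : ℂ) * Complex.exp (-(G / τ))‖ ≤ 1 / 2 := by
      have := norm_integral_le_of_norm_le (cauchy_integrable σ hσ')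
        ((ae_restrict_iff' measurableSet_Ioi).mpr
          (ae_of_all _ fun τ hτ => norm_term_le σ hσ'.le G hG.1.le hτ))
      rwa [cauchy_integral σ hσ'] at this
    rw [norm_mul, norm_mul, Complex.norm_real, Real.norm_eq_abs, abs_of_nonneg hc]
    calc (1 / π) * t / (1 + (σ * t) ^ 2) * ‖Complex.exp (Complex.I * σ * (G + v))‖ *
          ‖∫ τ in Set.Ioi (0 : ℝ),
            (((1 / π) * σ / (1 + (τ * σ) ^ 2) : ℝ) : ℂ) * Complex.exp (-(G / τ))‖
        ≤ (1 / π) * t / (1 + (σ * t) ^ 2) * ‖Complex.exp (Complex.I * σ * (G + v))‖ :=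
          mul_le_of_le_one_right (mul_nonneg hc (norm_nonneg _)) (hib.trans (by norm_num))
      _ ≤ (1 / π) * t / (1 + (σ * t) ^ 2) := mul_le_of_le_one_right hc heb
  · exact cauchy_integrable t ht
  · refine (ae_restrict_iff' measurableSet_Ioi).mpr (ae_of_all _ fun σ hσ => ?_)
    have hσ' : (0:ℝ) < σ := hσ
    have h1 : Tendsto (fun G : ℂ => Complex.exp (Complex.I * σ * (G + v)))
        (nhds 0) (nhds (Complex.exp (Complex.I * σ * v))) := by
      have hcont : Continuous fun G : ℂ => Complex.exp (Complex.I * σ * (G + v)) := by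
        exact Complex.continuous_exp.comp (continuous_const.mul (continuous_id.add continuous_const))
      simpa using hcont.tendsto 0
    have h2 := inner_tendsto σ hσ'
    exact ((tendsto_const_nhds.mul (h1.mono_left nhdsWithin_le_nhds)).mul h2)
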